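/- Let ψ: ℝⁿ → 𝒫(ℝⁿ) act entrywise as the reverse-biased ideal diode admittance Y_diode, where Y_diode(v) = {0} for v > 0, Y_diode(0) = (-∞, 0], Y_diode(v) = ∅ for v < 0. Let H ∈ ℝ^{n×n} be diagonal with positive diagonal entries and let b ∈ ℝⁿ. Then the unique v ∈ ℝⁿ satisfying 0 ∈ Hv + ψ(v) + b is given entrywise by v[j] = max(-b[j]/H[j][j], 0) = ReLU(-H⁻¹b)[j]. -/

import Mathlib

open Matrix

/-- The reverse-biased ideal diode admittance as a set-valued map. -/
noncomputable def Ydiode (v : ℝ) : Set ℝ :=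
  if v > 0 then {0} else if v = 0 then Set.Iic 0 else ∅

/-- With `ψ` acting entrywise as the reverse-biased ideal diode admittance and
`H` diagonal with positive diagonal entries, the unique solution of
`0 ∈ Hv + ψ(v) + b` is `v = ReLU(-H⁻¹ b)`, entrywise `v j = max (-(b j)/(H j j)) 0`. -/
theorem crossbar_layer_relu {n : ℕ} (d : Fin n → ℝ) (hd : ∀ j, 0 < d j)
    (H : Matrix (Fin n) (Fin n) ℝ) (hH : H = Matrix.diagonal d)
    (b : Fin n → ℝ) (v : Fin n → ℝ) :
    (∃ w : Fin n → ℝ, (∀ j, w j ∈ Ydiode (v j)) ∧ H.mulVec v + w + b = 0) ↔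
      ∀ j, v j = max (-(b j) / H j j) 0 := by
  subst hH
  have hdd : ∀ j, Matrix.diagonal d j j = d j := fun j => Matrix.diagonal_apply_eq d j
  constructor
  · rintro ⟨w, hw, heq⟩ j
    have hj : d j * v j + w j + b j = 0 := by
      have := congrFun heq j
      simpa [Matrix.mulVec_diagonal] using this
    have hwj := hw j
    rw [hdd]
    rcases lt_trichotomy (v j) 0 with h | h | h
    · simp [Ydiode, h.not_gt, h.ne] at hwj
    · have : w j ≤ 0 := by simpa [Ydiode, h] using hwj
      have hz : d j * v j = 0 := by rw [h]; ring
      have hb : 0 ≤ b j := by linarith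
      have h2 : -(b j) / d j ≤ 0 := by
        rw [div_nonpos_iff]; right; exact ⟨by linarith, (hd j).le⟩
      rw [max_eq_right h2]; exact h
    · have hw0 : w j = 0 := by simpa [Ydiode, h] using hwj
      have hv : v j = -(b j) / d j := by
        rw [eq_div_iff (hd j).ne']
        nlinarith
      have : 0 < -(b j) / d j := hv ▸ h
      rw [max_eq_left this.le, ← hv]
  · intro hv
    refine ⟨fun j => -(d j * v j + b j), fun j => ?_, ?_⟩
    · have h := hv j
      rw [hdd] at h
      rcases le_or_gt (-(b j) / d j) 0 with hle | hlt
      · have hv0 : v j = 0 := by rw [h]; exact max_eq_right hle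
        have hb : 0 ≤ b j := by
          rcases div_nonpos_iff.1 hle with ⟨h1, h2⟩ | ⟨h1, h2⟩
          · linarith [hd j]
          · linarith
        simp [Ydiode, hv0]
        linarith
      · have hv0 : v j = -(b j) / d j := by rw [h, max_eq_left hlt.le]
        have hvp : 0 < v j := hv0 ▸ hlt
        have hc : d j * (-b j / d j) = -b j := by
          rw [mul_comm]; exact div_mul_cancel₀ _ (hd j).ne'
        have : d j * v j + b j = 0 := by rw [hv0, hc]; ring
        simp [Ydiode, hvp, this]
    · funext j
      simp only [Pi.add_apply, Matrix.mulVec_diagonal, Pi.zero_apply]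
      ring
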